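/- Let φ be an injective endomorphism of the free group F_n and let W be an attracting fixed point of φ, with length-p prefixes W_p. Then the word length of the reduced word W_p^{-1} φ(W_p) tends to infinity as p → ∞. -/

import Mathlib

open Filter

namespace ZZFix

/-- A letter: a basis element together with a sign. -/
abbrev Letter (α : Type*) := α × Bool

/-- The inverse letter. -/
def linv {α : Type*} (l : Letter α) : Letter α := (l.1, !l.2)

/-- An infinite reduced word: a sequence of letters with no adjacent cancellation. -/
def InfWord (α : Type*) : Type _ := {w : ℕ → Letter α // ∀ i, w (i + 1) ≠ linv (w i)}

/-- The length-`i` prefix of an infinite reduced word, as a list of letters. -/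
def prefixList {α : Type*} (W : InfWord α) (i : ℕ) : List (Letter α) :=
  (List.range i).map W.1

/-- The length-`i` prefix of an infinite reduced word, as an element of the free group. -/
def wordPrefix {α : Type*} (W : InfWord α) (i : ℕ) : FreeGroup α :=
  FreeGroup.mk (prefixList W i)

/-- Length of the longest common prefix of two lists. -/
def commonPrefixLength {β : Type*} [DecidableEq β] : List β → List β → ℕ
  | a :: as, b :: bs => if a = b then commonPrefixLength as bs + 1 else 0
  | _, _ => 0

variable {α : Type*} [DecidableEq α]

/-- `|W ∧ g|` for an infinite reduced word `W` and a finite reduced word `g`. -/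
def wedgeF (W : InfWord α) (g : FreeGroup α) : ℕ :=
  commonPrefixLength (prefixList W (FreeGroup.toWord g).length) (FreeGroup.toWord g)

/-- `|g ∧ h|` for finite reduced words. -/
def wedgeFF (g h : FreeGroup α) : ℕ :=
  commonPrefixLength (FreeGroup.toWord g) (FreeGroup.toWord h)

/-- `|W ∧ V|` for infinite reduced words, valued in `ℕ∞` (it is `⊤` iff `W = V`). -/
noncomputable def wedgeI {α : Type*} (W V : InfWord α) : ℕ∞ :=
  sSup ((fun i : ℕ => (i : ℕ∞)) '' {i : ℕ | prefixList W i = prefixList V i})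

/-- A sequence of group elements converges to the infinite reduced word `W`
(in the initial segment metric on `F ⊔ ∂F`). -/
def ConvergesTo (u : ℕ → FreeGroup α) (W : InfWord α) : Prop :=
  Tendsto (fun i => wedgeF W (u i)) atTop atTop

/-- `W` is a fixed infinite word of `φ`: `|W ∧ φ(W_i)| → ∞`. -/
def IsFixedInfWord (φ : FreeGroup α →* FreeGroup α) (W : InfWord α) : Prop :=
  Tendsto (fun i => wedgeF W (φ (wordPrefix W i))) atTop atTop

/-- `W` is an attracting fixed word of `φ`: it is fixed and `|W ∧ φ(W_i)| - i → +∞`. -/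
def IsAttractingFixedWord (φ : FreeGroup α →* FreeGroup α) (W : InfWord α) : Prop :=
  IsFixedInfWord φ W ∧
    Tendsto (fun i => (wedgeF W (φ (wordPrefix W i)) : ℤ) - (i : ℤ)) atTop atTop

/-- The fixed subgroup of an endomorphism. -/
def fixedSubgroup {G : Type*} [Group G] (φ : G →* G) : Subgroup G where
  carrier := {g | φ g = g}
  one_mem' := map_one φ
  mul_mem' := by
    intro a b ha hb
    simp only [Set.mem_setOf_eq] at *
    rw [map_mul, ha, hb]
  inv_mem' := by
    intro a ha
    simp only [Set.mem_setOf_eq] at *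
    rw [map_inv, ha]

/-- The rank (minimal number of generators) of a subgroup, valued in `ℕ∞`. -/
noncomputable def grpRank {G : Type*} [Group G] (H : Subgroup G) : ℕ∞ :=
  sInf {k : ℕ∞ | ∃ S : Finset G, Subgroup.closure (S : Set G) = H ∧ (S.card : ℕ∞) = k}

/-- Two infinite reduced words are equivalent (w.r.t. `φ`) if `W' = U·W` for some
`U ∈ fix(φ)`, i.e. the reduced products `U·W_i` converge to `W'`. -/
def EquivFixedWords (φ : FreeGroup α →* FreeGroup α) (W W' : InfWord α) : Prop :=
  ∃ U ∈ fixedSubgroup φ, ConvergesTo (fun i => U * wordPrefix W i) W'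

/-- `a(φ)`: the number of equivalence classes of attracting fixed words, in `ℕ∞`. -/
noncomputable def aCard (φ : FreeGroup α →* FreeGroup α) : ℕ∞ :=
  ENat.card (Quot fun (W W' : {W : InfWord α // IsAttractingFixedWord φ W}) =>
    EquivFixedWords φ W.1 W'.1)

/-- The inner automorphism `i_c : g ↦ c g c⁻¹`, as a monoid homomorphism. -/
def innerAut {G : Type*} [Group G] (c : G) : G →* G := (MulAut.conj c).toMonoidHom

/-- Two endomorphisms are similar if `ψ₂ = i_c ∘ ψ₁ ∘ i_c⁻¹` for some `c`. -/
def Similar {G : Type*} [Group G] (ψ₁ ψ₂ : G →* G) : Prop :=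
  ∃ c : G, ψ₂ = ((innerAut c).comp ψ₁).comp (innerAut c⁻¹)

/-- The trace of the endomorphism of `ℤⁿ` induced by `φ` on the abelianization. -/
def abTrace {n : ℕ} (φ : FreeGroup (Fin n) →* FreeGroup (Fin n)) : ℤ :=
  ∑ i : Fin n, Multiplicative.toAdd
    ((FreeGroup.lift fun k => Multiplicative.ofAdd (if k = i then (1 : ℤ) else 0))
      (φ (FreeGroup.of i)))

/-- The constant infinite reduced word `l l l ⋯`. -/
def constWord {α : Type*} (l : Letter α) : InfWord α :=
  ⟨fun _ => l, fun _ h => by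
    have h2 := congrArg Prod.snd h
    simp [linv] at h2⟩

/-- `W` is an attracting fixed point of `φ`: it is fixed, and there is `i₀` such that
every finite or infinite reduced word `V` with `|W ∧ V| ≥ i₀` satisfies
`|W ∧ φᵖ(V)| → ∞` as `p → ∞`. -/
def IsAttractingFixedPoint (φ : FreeGroup α →* FreeGroup α) (W : InfWord α) : Prop :=
  IsFixedInfWord φ W ∧
    ∃ i₀ : ℕ,
      (∀ g : FreeGroup α, i₀ ≤ wedgeF W g →
        Tendsto (fun p => wedgeF W ((⇑φ)^[p] g)) atTop atTop) ∧
      (∀ V : InfWord α, (i₀ : ℕ∞) ≤ wedgeI W V →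
        ∀ Vs : ℕ → InfWord α, Vs 0 = V →
          (∀ p, ConvergesTo (fun i => φ (wordPrefix (Vs p) i)) (Vs (p + 1))) →
          Tendsto (fun p => wedgeI W (Vs p)) atTop atTop)

open scoped Classical in
/-- The initial segment metric. -/
noncomputable def distIS {α : Type*} (W V : InfWord α) : ℝ :=
  if W = V then 0 else 1 / (1 + ((wedgeI W V).toNat : ℝ))



section Aux

variable {α : Type*} [DecidableEq α]

/-- A list of letters is reduced if no two adjacent letters cancel. -/
def Reduced (L : List (Letter α)) : Prop := List.Chain' (fun a b => b ≠ linv a) L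

lemma linv_linv (l : Letter α) : linv (linv l) = l := by simp [linv]

lemma reduce_eq_self {L : List (Letter α)} (h : Reduced L) : FreeGroup.reduce L = L := by
  induction L with
  | nil => rfl
  | cons x L ih =>
    have hL : Reduced L := h.tail
    rw [FreeGroup.reduce.cons, ih hL]
    cases L with
    | nil => rfl
    | cons y t =>
      have hy : y ≠ linv x := (List.isChain_cons_cons.mp h).1
      have hcond : ¬ (x.1 = y.1 ∧ x.2 = !y.2) := by
        rintro ⟨h1, h2⟩
        apply hy
        have h3 : y.2 = !x.2 := by rw [h2, Bool.not_not]
        cases y; cases x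
        simp only [linv] at h1 h3 ⊢
        exact Prod.ext h1.symm h3
      simp [hcond]

lemma toWord_mk_reduced {L : List (Letter α)} (h : Reduced L) :
    (FreeGroup.mk L).toWord = L := by
  rw [FreeGroup.toWord_mk, reduce_eq_self h]

lemma Reduced.invRev {L : List (Letter α)} (h : Reduced L) :
    Reduced (FreeGroup.invRev L) := by
  rw [Reduced, List.Chain', FreeGroup.invRev, List.isChain_reverse, List.isChain_map]
  refine h.imp ?_
  intro a b hab
  show (fun g : Letter α => (g.1, !g.2)) a ≠ linv ((fun g : Letter α => (g.1, !g.2)) b)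
  change linv a ≠ linv (linv b)
  rw [linv_linv]
  intro heq
  exact hab heq.symm

lemma toWord_mk_append :
    ∀ (B : List (Letter α)), Reduced B → ∀ (A : List (Letter α)), Reduced A →
      ∃ k, k ≤ A.length ∧ k ≤ B.length ∧
        (FreeGroup.mk (A ++ B)).toWord = A.take (A.length - k) ++ B.drop k := by
  intro B
  induction B with
  | nil =>
    intro _ A hA
    exact ⟨0, Nat.zero_le _, Nat.zero_le _, by simp [toWord_mk_reduced hA]⟩
  | cons y B' ih =>
    intro hB A hA
    rcases List.eq_nil_or_concat A with rfl | ⟨A', x, rfl⟩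
    · exact ⟨0, Nat.zero_le _, Nat.zero_le _, by simp [toWord_mk_reduced hB]⟩
    rw [List.concat_eq_append] at hA ⊢
    by_cases hxy : y = linv x
    · have hA' : Reduced A' := (List.isChain_append.mp hA).1
      have hB' : Reduced B' := hB.tail
      obtain ⟨k, hk1, hk2, hk3⟩ := ih hB' A' hA'
      have hred : FreeGroup.reduce ((A' ++ [x]) ++ y :: B') = FreeGroup.reduce (A' ++ B') := by
        have he : (A' ++ [x]) ++ y :: B' = A' ++ (x.1, x.2) :: (x.1, !x.2) :: B' := by
          subst hxy; simp [linv]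
        rw [he]
        exact FreeGroup.reduce.Step.eq FreeGroup.Red.Step.not
      refine ⟨k + 1, ?_, ?_, ?_⟩
      · simp only [List.length_append, List.length_singleton]
        omega
      · simp only [List.length_cons]
        omega
      · rw [FreeGroup.toWord_mk, hred, ← FreeGroup.toWord_mk, hk3]
        have hlen : (A' ++ [x]).length - (k + 1) = A'.length - k := by
          simp only [List.length_append, List.length_singleton]; omega
        rw [hlen, List.take_append_of_le_length (Nat.sub_le _ _)]
        rfl
    · have hred : Reduced ((A' ++ [x]) ++ y :: B') := by
        rw [Reduced, List.Chain', List.isChain_append]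
        refine ⟨hA, hB, ?_⟩
        intro a ha b hb
        have ha' : x = a := by
          rw [List.getLast?_concat] at ha
          simpa using ha
        have hb' : y = b := by simpa using hb
        subst ha'; subst hb'
        exact hxy
      refine ⟨0, Nat.zero_le _, Nat.zero_le _, ?_⟩
      rw [toWord_mk_reduced hred, Nat.sub_zero, List.take_length, List.drop_zero]

lemma prefixList_succ (W : InfWord α) (i : ℕ) :
    prefixList W (i + 1) = prefixList W i ++ [W.1 i] := by
  simp [prefixList, List.range_succ]

lemma prefixList_length (W : InfWord α) (i : ℕ) : (prefixList W i).length = i := by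
  simp [prefixList]

lemma prefixList_reduced (W : InfWord α) (i : ℕ) : Reduced (prefixList W i) := by
  induction i with
  | zero => exact List.isChain_nil
  | succ i ih =>
    rw [prefixList_succ, Reduced, List.Chain', List.isChain_append]
    refine ⟨ih, List.isChain_singleton _, ?_⟩
    intro a ha b hb
    have hb' : W.1 i = b := by simpa using hb
    cases i with
    | zero => simp [prefixList] at ha
    | succ j =>
      have hl : (prefixList W (j + 1)).getLast? = some (W.1 j) := by
        rw [prefixList_succ, List.getLast?_concat]
      rw [hl] at ha
      have ha' : W.1 j = a := by simpa using ha
      subst ha'; subst hb'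
      exact W.2 j

lemma prefixList_take (W : InfWord α) {i j : ℕ} (h : i ≤ j) :
    (prefixList W j).take i = prefixList W i := by
  simp [prefixList, ← List.map_take, List.take_range, Nat.min_eq_left h]

lemma toWord_wordPrefix (W : InfWord α) (i : ℕ) :
    (wordPrefix W i).toWord = prefixList W i :=
  toWord_mk_reduced (prefixList_reduced W i)

lemma cpl_append_ge {β : Type*} [DecidableEq β] (P a b : List β) :
    P.length ≤ commonPrefixLength (P ++ a) (P ++ b) := by
  induction P with
  | nil => simp
  | cons x t ih => simpa [commonPrefixLength] using ih

lemma wedgeF_mul_inv_ge (W : InfWord α) {p q : ℕ} (hpq : p ≤ q) :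
    q - p ≤ wedgeF W (wordPrefix W q * (wordPrefix W p)⁻¹) := by
  have hA := prefixList_reduced W q
  have hB := (prefixList_reduced W p).invRev
  have hg : wordPrefix W q * (wordPrefix W p)⁻¹ =
      FreeGroup.mk (prefixList W q ++ FreeGroup.invRev (prefixList W p)) := by
    rw [wordPrefix, wordPrefix, FreeGroup.inv_mk, FreeGroup.mul_mk]
  obtain ⟨k, hk1, hk2, hk3⟩ := toWord_mk_append _ hB _ hA
  rw [prefixList_length] at hk1
  rw [FreeGroup.invRev_length, prefixList_length] at hk2
  have htake : (prefixList W q).take ((prefixList W q).length - k) = prefixList W (q - k) := by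
    rw [prefixList_length]
    exact prefixList_take W (Nat.sub_le q k)
  have hword : (wordPrefix W q * (wordPrefix W p)⁻¹).toWord
      = prefixList W (q - k) ++ (FreeGroup.invRev (prefixList W p)).drop k := by
    rw [hg, hk3, htake]
  have hlenB : ((FreeGroup.invRev (prefixList W p)).drop k).length = p - k := by
    simp [FreeGroup.invRev_length, prefixList_length]
  have hL : (wordPrefix W q * (wordPrefix W p)⁻¹).toWord.length = (q - k) + (p - k) := by
    rw [hword, List.length_append, prefixList_length, hlenB]
  have hsplit : prefixList W (wordPrefix W q * (wordPrefix W p)⁻¹).toWord.length =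
      prefixList W (q - k) ++ (prefixList W (wordPrefix W q * (wordPrefix W p)⁻¹).toWord.length).drop (q - k) := by
    conv_lhs => rw [← List.take_append_drop (q - k) (prefixList W (wordPrefix W q * (wordPrefix W p)⁻¹).toWord.length)]
    rw [prefixList_take W (by rw [hL]; omega)]
  calc q - p ≤ q - k := Nat.sub_le_sub_left hk2 q
    _ = (prefixList W (q - k)).length := (prefixList_length W (q - k)).symm
    _ ≤ _ := by
        rw [wedgeF, hsplit, hword]
        exact cpl_append_ge _ _ _

end Aux

/-- from the proof of Proposition 2.3: if `W` is an attracting fixed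
point of `φ`, then `|W_p⁻¹ φ(W_p)| → ∞`. -/
theorem stmt18 {n : ℕ} (φ : FreeGroup (Fin n) →* FreeGroup (Fin n))
    (hφ : Function.Injective φ) (W : InfWord (Fin n))
    (hW : IsAttractingFixedPoint φ W) :
    Tendsto
      (fun p => (FreeGroup.toWord ((wordPrefix W p)⁻¹ * φ (wordPrefix W p))).length)
      atTop atTop := by
  by_contra hcon
  obtain ⟨hfix, i₀, hclause1, _⟩ := hW
  rw [tendsto_atTop_atTop] at hcon
  push_neg at hcon
  obtain ⟨b, hb⟩ := hcon
  set h : ℕ → FreeGroup (Fin n) := fun p => (wordPrefix W p)⁻¹ * φ (wordPrefix W p) with hdef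
  have hT : {p | (h p).toWord.length < b}.Infinite := by
    rw [← Nat.frequently_atTop_iff_infinite, Filter.frequently_atTop]
    intro N
    obtain ⟨p, hp1, hp2⟩ := hb N
    exact ⟨p, hp1, hp2⟩
  have hfin : {x : FreeGroup (Fin n) | x.toWord.length < b}.Finite :=
    Set.Finite.preimage (Function.Injective.injOn FreeGroup.toWord_injective)
      (List.finite_length_lt _ b)
  have hfiber : ∃ u, {p | (h p).toWord.length < b ∧ h p = u}.Infinite := by
    by_contra hno
    push_neg at hno
    have hsub : {p | (h p).toWord.length < b} ⊆
        ⋃ u ∈ {x : FreeGroup (Fin n) | x.toWord.length < b},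
          {p | (h p).toWord.length < b ∧ h p = u} := by
      intro p hp
      exact Set.mem_biUnion hp ⟨hp, rfl⟩
    exact hT (Set.Finite.subset
      (Set.Finite.biUnion hfin (fun u _ => hno u)) hsub)
  obtain ⟨u, hS⟩ := hfiber
  obtain ⟨p0, hp0⟩ := hS.nonempty
  obtain ⟨q0, hq0S, hq0⟩ := hS.exists_gt (p0 + i₀)
  have hup : φ (wordPrefix W p0) = wordPrefix W p0 * u := by
    rw [← hp0.2, hdef, mul_inv_cancel_left]
  have huq : φ (wordPrefix W q0) = wordPrefix W q0 * u := by
    rw [← hq0S.2, hdef, mul_inv_cancel_left]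
  set g := wordPrefix W q0 * (wordPrefix W p0)⁻¹ with hgdef
  have hgfix : φ g = g := by
    rw [hgdef, map_mul, map_inv, hup, huq]
    group
  have hiter : ∀ k, (⇑φ)^[k] g = g := fun k => Function.iterate_fixed hgfix k
  have hwedge : i₀ ≤ wedgeF W g := by
    have h1 : q0 - p0 ≤ wedgeF W g := wedgeF_mul_inv_ge W (by omega)
    omega
  have htend := hclause1 g hwedge
  have hconst : (fun p => wedgeF W ((⇑φ)^[p] g)) = fun _ => wedgeF W g :=
    funext fun p => by rw [hiter p]
  rw [hconst] at htend
  obtain ⟨p, hp⟩ := (Filter.tendsto_atTop.mp htend (wedgeF W g + 1)).exists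
  omega

end ZZFix
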